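/- arXiv:2006.06970 — 3 statements merged into one kernel-verified Lean document; each statement's English description precedes it below -/
import Mathlib

section
/- Every natural number N can be written uniquely as N = Σ_{i≥0} d_i F_{i+2}, where F_k are the Fibonacci numbers (F_0=0, F_1=1), each digit d_i ∈ {0,1}, only finitely many d_i are nonzero, and no two consecutive digits are both 1 (d_i d_{i+1} = 11 never occurs). -/
noncomputable def phi : ℝ := (1 + Real.sqrt 5) / 2

/-- Lower Wythoff sequence. -/
noncomputable def A (n : ℕ) : ℕ := (⌊(n : ℝ) * phi⌋).toNat

/-- Upper Wythoff sequence. -/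
noncomputable def B (n : ℕ) : ℕ := (⌊(n : ℝ) * phi ^ 2⌋).toNat

/-- `d` is the digit sequence of the Zeckendorf expansion of `N`:
digits are 0/1, no two consecutive 1's, finitely many nonzero digits,
and `N = Σ dᵢ · F_{i+2}`. -/
def IsZeck (N : ℕ) (d : ℕ → ℕ) : Prop :=
  (∀ i, d i ≤ 1) ∧ (∀ i, ¬(d i = 1 ∧ d (i + 1) = 1)) ∧
  (Function.support d).Finite ∧ N = ∑ᶠ i, d i * Nat.fib (i + 2)

local instance zeckTransInst : IsTrans ℕ fun a b ↦ b + 2 ≤ a where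
  trans _a _b _c hba hcb := hcb.trans <| le_self_add.trans hba

lemma zeck_sum_aux : ∀ l : List ℕ, l.Nodup → (∀ a ∈ l, 2 ≤ a) →
    (l.map Nat.fib).sum = ∑ᶠ i, (if i + 2 ∈ l then 1 else 0) * Nat.fib (i + 2) := by
  intro l
  induction l with
  | nil => simp
  | cons a t ih =>
    intro hnd hge
    have hat : a ∉ t := (List.nodup_cons.1 hnd).1
    have ha2 : 2 ≤ a := hge a List.mem_cons_self
    have hrec := ih (List.nodup_cons.1 hnd).2 (fun x hx => hge x (List.mem_cons_of_mem a hx))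
    simp only [List.map_cons, List.sum_cons, hrec]
    have key : ∀ i : ℕ, (if i + 2 ∈ a :: t then (1:ℕ) else 0) * Nat.fib (i + 2)
        = (if i + 2 = a then Nat.fib (i + 2) else 0)
          + (if i + 2 ∈ t then 1 else 0) * Nat.fib (i + 2) := by
      intro i
      by_cases hia : i + 2 = a
      · simp [List.mem_cons, hia, hat]
      · simp [List.mem_cons, hia]
    rw [finsum_congr key, finsum_add_distrib]
    · congr 1
      · rw [finsum_eq_single _ (a - 2) (fun x hx => if_neg (by omega))]
        have h2 : a - 2 + 2 = a := by omega
        rw [if_pos h2, h2]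
    · apply Set.Finite.subset (Set.finite_singleton (a - 2))
      intro x hx
      have hxa : x + 2 = a := by
        by_contra hne
        simp [Function.mem_support, hne] at hx
      simp only [Set.mem_singleton_iff]
      omega
    · apply Set.Finite.subset (Set.Finite.preimage (f := fun i => i + 2)
        (Set.injOn_of_injective (fun a b => by omega)) t.finite_toSet)
      intro i hi
      simp only [Function.mem_support, ne_eq, mul_eq_zero, not_or, ite_eq_right_iff,
        not_forall] at hi
      exact hi.1.1

/-- any digit function satisfying `IsZeck N d` comes from a Zeckendorf list. -/
lemma zeck_to_list {N : ℕ} {d : ℕ → ℕ} (h : IsZeck N d) :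
    ∃ l : List ℕ, l.IsZeckendorfRep ∧ (∀ i, d i = if i + 2 ∈ l then 1 else 0) ∧
      (l.map Nat.fib).sum = N := by
  obtain ⟨h1, h2, hfin, hsum⟩ := h
  set s : Finset ℕ := hfin.toFinset with hs
  have hmem : ∀ i, i ∈ s ↔ d i = 1 := by
    intro i
    rw [hs, Set.Finite.mem_toFinset, Function.mem_support]
    have := h1 i
    omega
  set asc : List ℕ := s.sort (· ≤ ·) with hasc
  refine ⟨asc.reverse.map (· + 2), ?_, ?_, ?_⟩
  · -- IsZeckendorfRep
    rw [List.IsZeckendorfRep, List.isChain_iff_pairwise, List.pairwise_append]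
    refine ⟨?_, by simp, ?_⟩
    · rw [List.pairwise_map, List.pairwise_reverse]
      have hlt : asc.Pairwise (· < ·) := List.sortedLT_iff_pairwise.1 (Finset.sortedLT_sort s)
      refine hlt.imp_of_mem ?_
      intro a b ha hb hab
      have ha' : d a = 1 := (hmem a).1 (by simpa [hasc, Finset.mem_sort] using ha)
      have hb' : d b = 1 := (hmem b).1 (by simpa [hasc, Finset.mem_sort] using hb)
      have : b ≠ a + 1 := by
        intro hba; exact h2 a ⟨ha', by rwa [← hba]⟩
      omega
    · intro a ha b hb
      simp only [List.mem_singleton] at hb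
      subst hb
      simp only [List.mem_map] at ha
      obtain ⟨x, _, rfl⟩ := ha
      omega
  · intro i
    by_cases hi : i ∈ s
    · simp only [List.mem_map, List.mem_reverse]
      rw [if_pos ⟨i, by simpa [hasc, Finset.mem_sort] using hi, rfl⟩]
      exact (hmem i).1 hi
    · rw [if_neg]
      · by_contra hne
        exact hi ((hmem i).2 (by have := h1 i; omega))
      · simp only [List.mem_map, List.mem_reverse]
        rintro ⟨x, hx, hx2⟩
        have : x = i := by omega
        subst this
        exact hi (by simpa [hasc, Finset.mem_sort] using hx)
  · -- sum
    rw [hsum]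
    have hsub : (Function.support fun i => d i * Nat.fib (i + 2)) ⊆ ↑s := by
      intro i hi
      simp only [Function.mem_support] at hi
      rw [hs, Set.Finite.coe_toFinset, Function.mem_support]
      intro h0; apply hi; rw [h0]; ring
    rw [finsum_eq_finset_sum_of_support_subset _ hsub]
    have : ∀ i ∈ s, d i * Nat.fib (i + 2) = Nat.fib (i + 2) := by
      intro i hi; rw [(hmem i).1 hi, one_mul]
    rw [Finset.sum_congr rfl this]
    rw [List.map_map, ← List.sum_reverse ((asc.reverse.map _)), ← List.map_reverse,
      List.reverse_reverse]
    rw [← Finset.sum_map_toList]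
    have hperm := (Finset.sort_perm_toList s (· ≤ ·)).map (Nat.fib ∘ (· + 2))
    have := hperm.sum_eq
    simpa [Function.comp] using this

lemma list_to_zeck (l : List ℕ) (hl : l.IsZeckendorfRep) :
    IsZeck (l.map Nat.fib).sum (fun i => if i + 2 ∈ l then 1 else 0) := by
  have hpw : (l ++ [0]).Pairwise (fun a b => b + 2 ≤ a) :=
    List.isChain_iff_pairwise.1 hl
  have hpwl : l.Pairwise (fun a b => b + 2 ≤ a) :=
    (List.pairwise_append.1 hpw).1
  have hsep : ∀ a ∈ l, ∀ b ∈ l, a ≠ b → b + 2 ≤ a ∨ a + 2 ≤ b := by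
    have h' : l.Pairwise (fun a b => b + 2 ≤ a ∨ a + 2 ≤ b) :=
      hpwl.imp (fun h => Or.inl h)
    haveI : Std.Symm (fun a b : ℕ => b + 2 ≤ a ∨ a + 2 ≤ b) := ⟨fun x y h => h.symm⟩
    exact fun a ha b hb hab => h'.forall ha hb hab
  have hge : ∀ a ∈ l, 2 ≤ a := by
    intro a ha
    have := (List.pairwise_append.1 hpw).2.2 a ha 0 (by simp)
    omega
  have hnd : l.Nodup := hpwl.imp (fun h => by omega)
  refine ⟨fun i => by dsimp only; split <;> omega, ?_, ?_, ?_⟩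
  · intro i hcon
    by_cases h2 : i + 2 ∈ l
    · by_cases h3 : i + 1 + 2 ∈ l
      · rcases hsep _ h2 _ h3 (by omega) with h | h <;> omega
      · simp [h3] at hcon
    · simp [h2] at hcon
  · apply Set.Finite.subset (Set.Finite.preimage (f := fun i => i + 2)
      (Set.injOn_of_injective (fun a b => by omega)) l.finite_toSet)
    intro i hi
    simp only [Function.mem_support, ne_eq, ite_eq_right_iff, not_forall] at hi
    exact hi.1
  · exact zeck_sum_aux l hnd hge

/-- Zeckendorf's theorem: every natural number has a unique Zeckendorf expansion. -/
theorem zeckendorf_exists_unique (N : ℕ) : ∃! d : ℕ → ℕ, IsZeck N d := by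
  refine ⟨fun i => if i + 2 ∈ N.zeckendorf then 1 else 0, ?_, ?_⟩
  · have := list_to_zeck N.zeckendorf (Nat.isZeckendorfRep_zeckendorf N)
    rwa [Nat.sum_zeckendorf_fib] at this
  · intro d hd
    obtain ⟨l, hl, hdl, hsum⟩ := zeck_to_list hd
    have : l = N.zeckendorf := by
      rw [← Nat.zeckendorf_sum_fib hl, hsum]
    funext i
    rw [hdl i, this]
end

section
/- A natural number N has last Zeckendorf digit d_0 = 0 if and only if N+1 belongs to the lower Wythoff sequence, i.e., N = ⌊nφ⌋ - 1 for some positive integer n, where φ = (1+√5)/2. -/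
open Real goldenRatio Nat Finset

noncomputable def rr : ℝ := goldenRatio - 1

lemma rr_pos : 0 < rr := by unfold rr; nlinarith [one_lt_goldenRatio]
lemma rr_lt_one : rr < 1 := by unfold rr; nlinarith [goldenRatio_lt_two]
lemma rr_add_sq : rr + rr ^ 2 = 1 := by unfold rr; nlinarith [goldenRatio_sq]
lemma psi_eq : goldenConj = -rr := by
  have := goldenRatio_add_goldenConj
  unfold rr; linarith

noncomputable def ub (m : ℕ) : ℝ := if Odd m then rr ^ m else rr ^ (m+1)
noncomputable def vb (m : ℕ) : ℝ := if Even m then rr ^ m else rr ^ (m+1)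

lemma ub_pos (m : ℕ) : 0 < ub m := by
  unfold ub; split <;> exact pow_pos rr_pos _
lemma vb_pos (m : ℕ) : 0 < vb m := by
  unfold vb; split <;> exact pow_pos rr_pos _

lemma pow_anti {a b : ℕ} (h : a ≤ b) : rr ^ b ≤ rr ^ a :=
  pow_le_pow_of_le_one rr_pos.le rr_lt_one.le h

lemma ub_le_pow (m : ℕ) : ub m ≤ rr ^ m := by
  unfold ub; split
  · exact le_refl _
  · exact pow_anti (by omega)
lemma pow_le_ub (m : ℕ) : rr ^ (m+1) ≤ ub m := by
  unfold ub; split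
  · exact pow_anti (by omega)
  · exact le_refl _
lemma vb_le_pow (m : ℕ) : vb m ≤ rr ^ m := by
  unfold vb; split
  · exact le_refl _
  · exact pow_anti (by omega)
lemma pow_le_vb (m : ℕ) : rr ^ (m+1) ≤ vb m := by
  unfold vb; split
  · exact pow_anti (by omega)
  · exact le_refl _

lemma ub_mono {m k : ℕ} (h : m ≤ k) : ub k ≤ ub m := by
  rcases eq_or_lt_of_le h with rfl | h
  · exact le_refl _
  · exact (ub_le_pow k).trans ((pow_anti (by omega)).trans (pow_le_ub m))
lemma vb_mono {m k : ℕ} (h : m ≤ k) : vb k ≤ vb m := by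
  rcases eq_or_lt_of_le h with rfl | h
  · exact le_refl _
  · exact (vb_le_pow k).trans ((pow_anti (by omega)).trans (pow_le_vb m))

lemma pow_collapse (m : ℕ) : rr ^ (m+1) + rr ^ (m+2) = rr ^ m := by
  have h : rr ^ (m+1) + rr ^ (m+2) = rr ^ m * (rr + rr ^ 2) := by ring
  rw [h, rr_add_sq, mul_one]

lemma bound (s : Finset ℕ) : ∀ (m : ℕ), (∀ i ∈ s, m ≤ i) → (∀ i ∈ s, i+1 ∉ s) →
    (∑ i ∈ s, goldenConj ^ (i+1)) ≤ ub m ∧ -(vb m) ≤ ∑ i ∈ s, goldenConj ^ (i+1) := by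
  induction s using Finset.strongInduction with
  | _ s ih =>
    intro m hm hnc
    rcases s.eq_empty_or_nonempty with rfl | hne
    · simp only [Finset.sum_empty]
      exact ⟨(ub_pos m).le, by linarith [vb_pos m]⟩
    · set i0 := s.min' hne with hi0def
      have hi0 : i0 ∈ s := s.min'_mem hne
      have hsub : s.erase i0 ⊂ s := Finset.erase_ssubset hi0
      have hm' : ∀ i ∈ s.erase i0, i0 + 2 ≤ i := by
        intro i hi
        obtain ⟨hne', hmem⟩ := Finset.mem_erase.1 hi
        have h2 := s.min'_le i hmem
        have h3 : i ≠ i0 + 1 := by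
          intro h; exact hnc i0 hi0 (h ▸ hmem)
        omega
      have hnc' : ∀ i ∈ s.erase i0, i+1 ∉ s.erase i0 := fun i hi h =>
        hnc i (Finset.mem_erase.1 hi).2 (Finset.mem_erase.1 h).2
      obtain ⟨hu, hv⟩ := ih _ hsub (i0+2) hm' hnc'
      have hsum : ∑ i ∈ s, goldenConj ^ (i+1)
          = goldenConj ^ (i0+1) + ∑ i ∈ s.erase i0, goldenConj ^ (i+1) :=
        (Finset.add_sum_erase _ _ hi0).symm
      have hm0 : m ≤ i0 := hm i0 hi0
      rcases Nat.even_or_odd i0 with he | ho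
      · -- i0 even : ψ^(i0+1) = -rr^(i0+1)
        have hpsi : goldenConj ^ (i0+1) = -(rr ^ (i0+1)) := by
          rw [psi_eq, Odd.neg_pow he.add_one]
        have hub2 : ub (i0+2) ≤ ub m := ub_mono (by omega)
        have hvb2 : vb (i0+2) = rr ^ (i0+2) := by
          unfold vb; rw [if_pos (by exact he.add ⟨1, rfl⟩)]
        have hvb0 : vb i0 = rr ^ i0 := by unfold vb; rw [if_pos he]
        have hvbm : vb i0 ≤ vb m := vb_mono hm0
        constructor
        · have : goldenConj ^ (i0+1) ≤ 0 := by
            rw [hpsi]; simp [le_of_lt (pow_pos rr_pos (i0+1))]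
          linarith
        · have hc := pow_collapse i0
          rw [hsum, hpsi]
          rw [hvb2] at hv
          linarith [hvbm, hvb0.symm]
      · -- i0 odd : ψ^(i0+1) = rr^(i0+1)
        have hpsi : goldenConj ^ (i0+1) = rr ^ (i0+1) := by
          rw [psi_eq, Even.neg_pow ho.add_one]
        have hvb2 : vb (i0+2) ≤ vb m := vb_mono (by omega)
        have hub2 : ub (i0+2) = rr ^ (i0+2) := by
          unfold ub; rw [if_pos (by exact ho.add_even ⟨1, rfl⟩)]
        have hub0 : ub i0 = rr ^ i0 := by unfold ub; rw [if_pos ho]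
        have hubm : ub i0 ≤ ub m := ub_mono hm0
        constructor
        · have hc := pow_collapse i0
          rw [hsum, hpsi]
          rw [hub2] at hu
          linarith
        · have : 0 ≤ goldenConj ^ (i0+1) := by
            rw [hpsi]; exact (pow_pos rr_pos _).le
          linarith

lemma phi_eq : phi = goldenRatio := rfl

/-- Core floor computation. -/
lemma core (s : Finset ℕ) (h1 : ∀ i ∈ s, 1 ≤ i) (hnc : ∀ i ∈ s, i+1 ∉ s) :
    ⌊(((1 + ∑ i ∈ s, Nat.fib (i+1) : ℕ)) : ℝ) * phi⌋
      = ((∑ i ∈ s, Nat.fib (i+2) : ℕ) : ℤ) + 1 := by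
  set n : ℕ := 1 + ∑ i ∈ s, Nat.fib (i+1) with hn
  set N : ℕ := ∑ i ∈ s, Nat.fib (i+2) with hN
  have key : (n : ℝ) * phi = (N : ℝ) + phi - ∑ i ∈ s, goldenConj ^ (i+1) := by
    have hterm : ∀ i ∈ s, phi * (Nat.fib (i+1) : ℝ)
        = (Nat.fib (i+2) : ℝ) - goldenConj ^ (i+1) := by
      intro i _
      have h := fib_succ_sub_goldenRatio_mul_fib (i+1)
      rw [phi_eq]
      linarith
    have hcast : (n : ℝ) = 1 + ∑ i ∈ s, (Nat.fib (i+1) : ℝ) := by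
      rw [hn]; push_cast; ring
    have hNcast : (N : ℝ) = ∑ i ∈ s, (Nat.fib (i+2) : ℝ) := by
      rw [hN]; push_cast; ring
    have h2 : ∑ i ∈ s, (Nat.fib (i+1) : ℝ) * phi
        = ∑ i ∈ s, ((Nat.fib (i+2) : ℝ) - goldenConj ^ (i+1)) :=
      Finset.sum_congr rfl (fun i hi => by rw [mul_comm]; exact hterm i hi)
    rw [hcast, hNcast, add_mul, one_mul, Finset.sum_mul, h2, Finset.sum_sub_distrib]
    ring
  obtain ⟨hu, hv⟩ := bound s 1 h1 hnc
  have hub1 : ub 1 = rr := by unfold ub; rw [if_pos odd_one, pow_one]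
  have hvb1 : vb 1 = rr ^ 2 := by
    unfold vb; rw [if_neg (by simp)]
  have hrr : rr = phi - 1 := by rw [phi_eq]; rfl
  have hrr2 : rr ^ 2 = 2 - phi := by
    have := rr_add_sq
    rw [hrr] at this ⊢; linarith
  have hlow : (N : ℝ) + 1 ≤ (n : ℝ) * phi := by
    rw [key]; rw [hub1, hrr] at hu; linarith
  have hhigh : (n : ℝ) * phi ≤ (N : ℝ) + 2 := by
    rw [key]; rw [hvb1, hrr2] at hv; linarith
  have hn0 : n ≠ 0 := by omega
  have hirr : Irrational ((n : ℝ) * phi) := by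
    rw [phi_eq]; exact goldenRatio_irrational.natCast_mul hn0
  have hne1 : (n : ℝ) * phi ≠ (N : ℝ) + 1 := by
    intro h
    exact hirr.ne_int ((N : ℤ) + 1) (by rw [h]; push_cast; ring)
  have hne2 : (n : ℝ) * phi ≠ (N : ℝ) + 2 := by
    intro h
    exact hirr.ne_int ((N : ℤ) + 2) (by rw [h]; push_cast; ring)
  rw [Int.floor_eq_iff]
  constructor
  · push_cast; linarith
  · push_cast; rcases lt_or_eq_of_le hhigh with h | h
    · linarith
    · exact absurd h hne2

/-- Extract a Finset Zeckendorf representation from a pairwise list. -/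
lemma of_list : ∀ l : List ℕ, l.Pairwise (fun a b => b + 2 ≤ a) → (∀ a ∈ l, 2 ≤ a) →
    ∃ t : Finset ℕ, (∀ j ∈ t, 2 ≤ j) ∧ (∀ j ∈ t, j + 1 ∉ t) ∧ (∀ j ∈ t, j ∈ l) ∧
      ∑ j ∈ t, Nat.fib j = (l.map Nat.fib).sum := by
  intro l
  induction l with
  | nil => intro _ _; exact ⟨∅, by simp, by simp, by simp, by simp⟩
  | cons a l ihl =>
    intro hp h2
    have hpl := (List.pairwise_cons.1 hp)
    obtain ⟨t, ht2, htnc, htmem, htsum⟩ := ihl hpl.2 (fun b hb => h2 b (List.mem_cons_of_mem a hb))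
    have hat : a ∉ t := by
      intro h
      have := hpl.1 a (htmem a h)
      omega
    refine ⟨insert a t, ?_, ?_, ?_, ?_⟩
    · intro j hj
      rcases Finset.mem_insert.1 hj with rfl | hj
      · exact h2 j (List.mem_cons_self)
      · exact ht2 j hj
    · intro j hj hj1
      rcases Finset.mem_insert.1 hj with rfl | hj
      · rcases Finset.mem_insert.1 hj1 with h | h
        · omega
        · have := hpl.1 _ (htmem _ h)
          omega
      · rcases Finset.mem_insert.1 hj1 with h | h
        · have := hpl.1 _ (htmem _ hj)
          omega
        · exact htnc j hj h
    · intro j hj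
      rcases Finset.mem_insert.1 hj with rfl | hj
      · exact List.mem_cons_self
      · exact List.mem_cons_of_mem _ (htmem j hj)
    · rw [Finset.sum_insert hat, htsum, List.map_cons, List.sum_cons]

/-- Zeckendorf existence in Finset form. -/
lemma exists_zfin (n : ℕ) : ∃ t : Finset ℕ, (∀ j ∈ t, 2 ≤ j) ∧ (∀ j ∈ t, j + 1 ∉ t) ∧
    ∑ j ∈ t, Nat.fib j = n := by
  have hrep := Nat.isZeckendorfRep_zeckendorf n
  have hsum := Nat.sum_zeckendorf_fib n
  rw [List.IsZeckendorfRep] at hrep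
  have : IsTrans ℕ (fun a b => b + 2 ≤ a) := ⟨fun _ _ _ h1 h2 => by omega⟩
  rw [List.isChain_iff_pairwise, List.pairwise_append] at hrep
  obtain ⟨hp, _, hmix⟩ := hrep
  have h2 : ∀ a ∈ n.zeckendorf, 2 ≤ a := by
    intro a ha
    have := hmix a ha 0 (List.mem_singleton_self _)
    omega
  obtain ⟨t, ht2, htnc, _, htsum⟩ := of_list _ hp h2
  exact ⟨t, ht2, htnc, by rw [htsum, hsum]⟩

/-- N has last Zeckendorf digit 0 iff N+1 is in the lower Wythoff sequence. -/
theorem zeck_digit0_eq_zero_iff (N : ℕ) :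
    (∃ d : ℕ → ℕ, IsZeck N d ∧ d 0 = 0) ↔
      ∃ n : ℕ, 0 < n ∧ (N : ℤ) = ⌊(n : ℝ) * phi⌋ - 1 := by
  constructor
  · rintro ⟨d, ⟨hd1, hd2, hfin, hNsum⟩, hd0⟩
    set s : Finset ℕ := hfin.toFinset with hs
    have hmem : ∀ i, i ∈ s ↔ d i ≠ 0 := fun i => hfin.mem_toFinset
    have hone : ∀ i ∈ s, d i = 1 := by
      intro i hi
      have := hd1 i
      have := (hmem i).1 hi
      omega
    have h1 : ∀ i ∈ s, 1 ≤ i := by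
      intro i hi
      have hi' := (hmem i).1 hi
      rcases Nat.eq_zero_or_pos i with rfl | h
      · exact absurd hd0 hi'
      · exact h
    have hnc : ∀ i ∈ s, i + 1 ∉ s := by
      intro i hi h
      exact hd2 i ⟨hone i hi, hone _ h⟩
    have hNs : N = ∑ i ∈ s, Nat.fib (i+2) := by
      rw [hNsum]
      rw [finsum_eq_sum_of_support_subset _ (s := s) (by
        intro i hi
        simp only [Function.mem_support] at hi
        simp only [Finset.coe_sort_coe, Finset.mem_coe]
        rw [hmem]
        intro h
        rw [h, zero_mul] at hi
        exact hi rfl)]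
      exact Finset.sum_congr rfl (fun i hi => by rw [hone i hi, one_mul])
    refine ⟨1 + ∑ i ∈ s, Nat.fib (i+1), by omega, ?_⟩
    have hc := core s h1 hnc
    rw [hc, ← hNs]
    omega
  · rintro ⟨n, hn, hNf⟩
    obtain ⟨t, ht2, htnc, htsum⟩ := exists_zfin (n - 1)
    set s : Finset ℕ := t.image (fun a => a - 1) with hsdef
    have hmems : ∀ i, i ∈ s ↔ ∃ a ∈ t, a - 1 = i := by
      intro i; rw [hsdef, Finset.mem_image]
    have h1 : ∀ i ∈ s, 1 ≤ i := by
      intro i hi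
      obtain ⟨a, ha, rfl⟩ := (hmems i).1 hi
      have := ht2 a ha
      omega
    have hnc : ∀ i ∈ s, i + 1 ∉ s := by
      intro i hi h
      obtain ⟨a, ha, hai⟩ := (hmems i).1 hi
      obtain ⟨b, hb, hbi⟩ := (hmems (i+1)).1 h
      have h2a := ht2 a ha
      have h2b := ht2 b hb
      have : b = a + 1 := by omega
      exact htnc a ha (this ▸ hb)
    have hsum1 : ∑ i ∈ s, Nat.fib (i+1) = n - 1 := by
      rw [hsdef, Finset.sum_image (by intro a ha b hb hab; have := ht2 a ha; have := ht2 b hb; simp only at hab; omega)]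
      rw [← htsum]
      exact Finset.sum_congr rfl (fun a ha => by have := ht2 a ha; congr 1; omega)
    have hn' : 1 + ∑ i ∈ s, Nat.fib (i+1) = n := by omega
    have hc := core s h1 hnc
    rw [hn'] at hc
    set N' : ℕ := ∑ i ∈ s, Nat.fib (i+2) with hN'
    have hNN : N = N' := by
      rw [hc] at hNf
      omega
    refine ⟨fun i => if i ∈ s then 1 else 0, ⟨?_, ?_, ?_, ?_⟩, ?_⟩
    · intro i; dsimp only; split <;> omega
    · intro i ⟨ha, hb⟩
      have his : i ∈ s := by by_contra h; simp [h] at ha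
      have his1 : i + 1 ∈ s := by by_contra h; simp [h] at hb
      exact hnc i his his1
    · apply Set.Finite.subset s.finite_toSet
      intro i hi
      simp only [Function.mem_support] at hi
      by_contra h
      simp [Finset.mem_coe] at h
      simp [h] at hi
    · rw [hNN, hN']
      rw [finsum_eq_sum_of_support_subset _ (s := s) (by
        intro i hi
        simp only [Function.mem_support] at hi
        simp only [Finset.coe_sort_coe, Finset.mem_coe]
        by_contra h
        simp [h] at hi)]
      exact Finset.sum_congr rfl (fun i hi => by simp [hi])
    · have h0 : 0 ∉ s := fun h => by have := h1 0 h; omega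
      simp [h0]
end

section
/- Let U be a finite composition of the Wythoff functions A(n)=⌊nφ⌋ and B(n)=⌊nφ²⌋, containing i occurrences of A and j occurrences of B. Then there is an integer constant λ_U such that U(n) = F_{i+2j}·A(n) + F_{i+2j-1}·n − λ_U for all n ≥ 1. -/
lemma sqrt5_sq : Real.sqrt 5 ^ 2 = 5 := Real.sq_sqrt (by norm_num)

lemma phi_gt_one : 1 < phi := by
  have h := sqrt5_sq
  have h2 : (2:ℝ) ≤ Real.sqrt 5 := by nlinarith [Real.sqrt_nonneg 5]
  unfold phi; linarith

lemma phi_lt_two : phi < 2 := by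
  have h := sqrt5_sq
  have h2 : Real.sqrt 5 < 3 := by nlinarith [Real.sqrt_nonneg 5]
  unfold phi; linarith

lemma phi_sq : phi ^ 2 = phi + 1 := by
  have h := sqrt5_sq
  unfold phi; field_simp; nlinarith [h]

lemma irr_phi : Irrational phi := by
  have h5 : Irrational (Real.sqrt 5) := (Nat.prime_five).irrational_sqrt
  have h1 : Irrational (((1:ℚ):ℝ) + Real.sqrt 5) := h5.ratCast_add 1
  have h2 : Irrational ((((1:ℚ):ℝ) + Real.sqrt 5) / ((2:ℕ):ℝ)) :=
    h1.div_natCast (by norm_num)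
  unfold phi
  convert h2 using 2 <;> norm_num

lemma fract_pos (m : ℕ) (hm : 1 ≤ m) : 0 < Int.fract ((m:ℝ) * phi) := by
  rw [Int.fract_pos]
  intro h
  have : Irrational ((m:ℝ) * phi) := irr_phi.natCast_mul (by omega)
  exact this.ne_int ⌊(m:ℝ) * phi⌋ h

lemma A_cast (n : ℕ) : (A n : ℤ) = ⌊(n : ℝ) * phi⌋ := by
  unfold A
  refine Int.toNat_of_nonneg (Int.floor_nonneg.mpr ?_)
  have h1 : (0:ℝ) ≤ (n:ℝ) := by positivity
  nlinarith [phi_gt_one]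

lemma A_pos (n : ℕ) (hn : 1 ≤ n) : 1 ≤ A n := by
  have h : (1:ℤ) ≤ ⌊(n : ℝ) * phi⌋ := by
    apply Int.le_floor.mpr
    have h1 : (1:ℝ) ≤ (n:ℝ) := by exact_mod_cast hn
    push_cast
    nlinarith [phi_gt_one]
  have := A_cast n
  omega

lemma B_eq (n : ℕ) : (B n : ℤ) = A n + n := by
  have h : (n : ℝ) * phi ^ 2 = (n : ℝ) * phi + (n:ℕ) := by rw [phi_sq]; ring
  unfold B
  rw [h, Int.floor_add_natCast]
  rw [Int.toNat_of_nonneg]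
  · rw [A_cast]
  · have : (0:ℤ) ≤ ⌊(n : ℝ) * phi⌋ := Int.floor_nonneg.mpr (by
      have : (0:ℝ) ≤ (n:ℝ) := by positivity
      nlinarith [phi_gt_one])
    omega

lemma B_pos (n : ℕ) (hn : 1 ≤ n) : 1 ≤ B n := by
  have := B_eq n
  have := A_pos n hn
  omega

lemma AA (m : ℕ) (hm : 1 ≤ m) : (A (A m) : ℤ) = A m + m - 1 := by
  rw [A_cast (A m), A_cast m]
  set x := (m:ℝ) * phi with hx
  have hθ1 : 0 < Int.fract x := fract_pos m hm
  have hθ2 : Int.fract x < 1 := Int.fract_lt_one x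
  have hflr : (⌊x⌋ : ℝ) = x - Int.fract x := by
    rw [Int.self_sub_fract]
  have hAm : ((A m : ℕ) : ℝ) = (⌊x⌋ : ℝ) := by
    exact_mod_cast congrArg (fun z : ℤ => (z:ℝ)) (A_cast m)
  have hxphi : x * phi = x + m := by
    rw [hx]; nlinarith [phi_sq]
  rw [Int.floor_eq_iff]
  constructor
  · rw [hAm, hflr]; push_cast
    nlinarith [phi_gt_one, phi_lt_two]
  · rw [hAm, hflr]; push_cast
    nlinarith [phi_gt_one, phi_lt_two]

lemma AB (m : ℕ) (hm : 1 ≤ m) : (A (B m) : ℤ) = 2 * A m + m := by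
  rw [A_cast (B m)]
  set x := (m:ℝ) * phi with hx
  have hθ1 : 0 < Int.fract x := fract_pos m hm
  have hθ2 : Int.fract x < 1 := Int.fract_lt_one x
  have hflr : (⌊x⌋ : ℝ) = x - Int.fract x := by rw [Int.self_sub_fract]
  have hAm : ((A m : ℕ) : ℝ) = (⌊x⌋ : ℝ) := by
    exact_mod_cast congrArg (fun z : ℤ => (z:ℝ)) (A_cast m)
  have hBm : ((B m : ℕ) : ℝ) = (⌊x⌋ : ℝ) + m := by
    have h : (B m : ℤ) = ⌊x⌋ + m := by rw [B_eq, A_cast]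
    exact_mod_cast congrArg (fun z : ℤ => (z:ℝ)) h
  have hxphi : x * phi = x + m := by
    rw [hx]; nlinarith [phi_sq]
  rw [Int.floor_eq_iff]
  constructor
  · rw [hBm, hflr]; push_cast
    nlinarith [phi_gt_one, phi_lt_two]
  · rw [hBm, hflr]; push_cast
    nlinarith [phi_gt_one, phi_lt_two]

lemma count_pos (t : List Bool) (ht : t ≠ []) :
    1 ≤ t.count false + 2 * t.count true := by
  match t with
  | x :: s => cases x <;> simp [List.count_cons] <;> omega

lemma key (l : List Bool) (hl : l ≠ []) :
    ∃ lam mu : ℤ, ∀ n : ℕ, 1 ≤ n →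
      1 ≤ (l.foldr (fun b f => (if b then B else A) ∘ f) (id : ℕ → ℕ)) n ∧
      ((l.foldr (fun b f => (if b then B else A) ∘ f) (id : ℕ → ℕ)) n : ℤ) =
        Nat.fib (l.count false + 2 * l.count true) * (A n : ℤ) +
          Nat.fib (l.count false + 2 * l.count true - 1) * (n : ℤ) - lam ∧
      ((A ((l.foldr (fun b f => (if b then B else A) ∘ f) (id : ℕ → ℕ)) n) : ℤ) =
        Nat.fib (l.count false + 2 * l.count true + 1) * (A n : ℤ) +
          Nat.fib (l.count false + 2 * l.count true) * (n : ℤ) - mu) := by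
  induction l with
  | nil => exact absurd rfl hl
  | cons b t ih =>
    by_cases ht : t = []
    · subst ht
      cases b
      · -- [false] : U = A
        refine ⟨0, 1, fun n hn => ?_⟩
        simp only [List.foldr_cons, List.foldr_nil, Function.comp, id,
          if_neg (by simp : ¬(false = true)), List.count_cons, List.count_nil]
        refine ⟨A_pos n hn, ?_, ?_⟩
        · norm_num [Nat.fib]
        · have := AA n hn
          norm_num [Nat.fib]
          push_cast at this ⊢
          linarith
      · -- [true] : U = B
        refine ⟨0, 0, fun n hn => ?_⟩
        simp only [List.foldr_cons, List.foldr_nil, Function.comp, id, if_pos rfl,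
          List.count_cons, List.count_nil]
        refine ⟨B_pos n hn, ?_, ?_⟩
        · have := B_eq n
          norm_num [Nat.fib]
          push_cast at this ⊢
          linarith
        · have h1 := AB n hn
          have h2 := B_eq n
          norm_num [Nat.fib]
          push_cast at h1 h2 ⊢
          linarith
    · obtain ⟨lam, mu, hV⟩ := ih ht
      have hk := count_pos t ht
      obtain ⟨s, hs⟩ : ∃ s, t.count false + 2 * t.count true = s + 1 :=
        ⟨t.count false + 2 * t.count true - 1, by omega⟩
      cases b
      · -- A ∘ V
        refine ⟨mu, mu + lam + 1, fun n hn => ?_⟩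
        obtain ⟨h1, h2, h3⟩ := hV n hn
        set V := t.foldr (fun b f => (if b then B else A) ∘ f) (id : ℕ → ℕ) with hVdef
        simp only [List.foldr_cons, Function.comp,
          if_neg (by simp : ¬(false = true)), List.count_cons]
        have hAVV := AA (V n) h1
        rw [hs] at h2 h3
        rw [show s + 1 - 1 = s from rfl] at h2
        rw [show s + 1 + 1 = s + 2 from rfl] at h3
        have hc : t.count false + 1 + 2 * t.count true = s + 2 := by omega
        refine ⟨A_pos (V n) h1, ?_, ?_⟩
        · rw [show (List.count false t + if (false == false) = true then 1 else 0) +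
            2 * (List.count true t + if (false == true) = true then 1 else 0) = s + 2 by
              simp; omega]
          rw [show s + 2 - 1 = s + 1 from rfl]
          exact h3
        · rw [show (List.count false t + if (false == false) = true then 1 else 0) +
            2 * (List.count true t + if (false == true) = true then 1 else 0) = s + 2 by
              simp; omega]
          rw [show s + 2 + 1 = s + 3 from rfl]
          rw [hAVV, h2, h3]
          have hf1 : Nat.fib (s + 3) = Nat.fib (s + 1) + Nat.fib (s + 2) :=
            Nat.fib_add_two
          have hf2 : Nat.fib (s + 2) = Nat.fib s + Nat.fib (s + 1) :=
            Nat.fib_add_two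
          push_cast [hf1, hf2]
          ring
      · -- B ∘ V
        refine ⟨mu + lam, 2 * mu + lam, fun n hn => ?_⟩
        obtain ⟨h1, h2, h3⟩ := hV n hn
        set V := t.foldr (fun b f => (if b then B else A) ∘ f) (id : ℕ → ℕ) with hVdef
        simp only [List.foldr_cons, Function.comp, if_pos rfl, List.count_cons, if_true]
        rw [show List.foldr (fun b f => (if b = true then B else A) ∘ f) id t = V from hVdef.symm]
        have hBVV := B_eq (V n)
        have hABV := AB (V n) h1
        rw [hs] at h2 h3
        rw [show s + 1 - 1 = s from rfl] at h2
        rw [show s + 1 + 1 = s + 2 from rfl] at h3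
        refine ⟨B_pos (V n) h1, ?_, ?_⟩
        · rw [show (List.count false t + if (true == false) = true then 1 else 0) +
            2 * (List.count true t + if (true == true) = true then 1 else 0) = s + 3 by
              simp; omega]
          rw [show s + 3 - 1 = s + 2 from rfl]
          rw [hBVV, h2, h3]
          have hf1 : Nat.fib (s + 3) = Nat.fib (s + 1) + Nat.fib (s + 2) :=
            Nat.fib_add_two
          have hf2 : Nat.fib (s + 2) = Nat.fib s + Nat.fib (s + 1) :=
            Nat.fib_add_two
          push_cast [hf1, hf2]
          ring
        · rw [show (List.count false t + if (true == false) = true then 1 else 0) +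
            2 * (List.count true t + if (true == true) = true then 1 else 0) = s + 3 by
              simp; omega]
          rw [show s + 3 + 1 = s + 4 from rfl]
          rw [hABV, h2, h3]
          have hf1 : Nat.fib (s + 4) = Nat.fib (s + 2) + Nat.fib (s + 3) :=
            Nat.fib_add_two
          have hf2 : Nat.fib (s + 3) = Nat.fib (s + 1) + Nat.fib (s + 2) :=
            Nat.fib_add_two
          have hf3 : Nat.fib (s + 2) = Nat.fib s + Nat.fib (s + 1) :=
            Nat.fib_add_two
          push_cast [hf1, hf2, hf3]
          ring

/-- Carlitz–Scoville–Hoggatt: any composition of the Wythoff functions A and B,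
with i occurrences of A () and j occurrences of B (), equals
F_{i+2j}·A(n) + F_{i+2j-1}·n − λ for some integer constant λ. -/
theorem carlitz_scoville_hoggatt (l : List Bool) (hl : l ≠ []) :
    ∃ lam : ℤ, ∀ n : ℕ, 1 ≤ n →
      ((l.foldr (fun b f => (if b then B else A) ∘ f) (id : ℕ → ℕ)) n : ℤ) =
        Nat.fib (l.count false + 2 * l.count true) * (A n : ℤ) +
          Nat.fib (l.count false + 2 * l.count true - 1) * (n : ℤ) - lam := by
  obtain ⟨lam, mu, h⟩ := key l hl
  exact ⟨lam, fun n hn => (h n hn).2.1⟩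
end
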